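/- arXiv:1411.5415 — 3 statements merged into one kernel-verified Lean document; each statement's English description precedes it below -/
import Mathlib

section
/- Let n and m be integers with n, m ≥ 2 and n ≡ m (mod 2) (same parity), and let d be any integer (the clock drift). Then there exists an integer t such that simultaneously: (i) for some i with 0 ≤ i ≤ n−2, either t ≡ n·i + d (mod n(n−1)) or t ≡ (n+1)·i + 1 + d (mod n(n−1)); and (ii) for some j with 0 ≤ j ≤ m−2, either t ≡ m·j (mod m(m−1)) or t ≡ (m+1)·j + 1 (mod m(m−1)). Hence two Hedis nodes with same-parity parameters discover each other for any amount of clock drift. -/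
/-- Two-modulus CRT: if `gcd a b ∣ x - y` then the system `t ≡ x (a)`, `t ≡ y (b)` has a
solution. -/
lemma hedis_crt2 (a b x y : ℤ) (h : (Int.gcd a b : ℤ) ∣ x - y) :
    ∃ t : ℤ, t ≡ x [ZMOD a] ∧ t ≡ y [ZMOD b] := by
  obtain ⟨k, hk⟩ := h
  have hg := Int.gcd_eq_gcd_ab a b
  refine ⟨x - a * (Int.gcdA a b * k), ?_, ?_⟩
  · exact Int.modEq_iff_dvd.mpr ⟨Int.gcdA a b * k, by ring⟩
  · refine Int.modEq_iff_dvd.mpr ⟨-(Int.gcdB a b * k), ?_⟩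
    have h2 : x - y = (a * Int.gcdA a b + b * Int.gcdB a b) * k := by rw [← hg]; exact hk
    linear_combination -h2

/-- Solvability of the linear congruence `a * s ≡ c (mod b)` when `gcd a b ∣ c`. -/
lemma hedis_lincong (a b c : ℤ) (h : (Int.gcd a b : ℤ) ∣ c) :
    ∃ s : ℤ, a * s ≡ c [ZMOD b] := by
  obtain ⟨k, hk⟩ := h
  have hg := Int.gcd_eq_gcd_ab a b
  refine ⟨Int.gcdA a b * k, Int.modEq_iff_dvd.mpr ⟨Int.gcdB a b * k, ?_⟩⟩
  have h2 : c = (a * Int.gcdA a b + b * Int.gcdB a b) * k := by rw [← hg]; exact hk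
  linear_combination h2

/-- Any multiple of `n` is an anchor slot of the parameter-`n` schedule. -/
lemma hedis_anchor {n : ℤ} (hn : 2 ≤ n) {s : ℤ} (h : n ∣ s) :
    ∃ i : ℤ, 0 ≤ i ∧ i ≤ n - 2 ∧ s ≡ n * i [ZMOD n * (n - 1)] := by
  obtain ⟨k, hk⟩ := h
  have h1 : (0 : ℤ) < n - 1 := by linarith
  refine ⟨k % (n - 1), Int.emod_nonneg k (by linarith), ?_, ?_⟩
  · have := Int.emod_lt_of_pos k h1; linarith
  · refine Int.modEq_iff_dvd.mpr ⟨-(k / (n - 1)), ?_⟩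
    have he : k % (n - 1) = k - (n - 1) * (k / (n - 1)) := by
      rw [Int.emod_def]
    rw [hk, he]; ring

/-- `n` and `n - 1` are coprime. -/
lemma hedis_coprime_sub_one (n : ℤ) : IsCoprime n (n - 1) :=
  ⟨1, -1, by ring⟩

/-- Core lemma: the case `m ≤ n`, stated with the drift moved onto the `n` side. -/
lemma hedis_core (n m d : ℤ) (hn : 2 ≤ n) (hm : 2 ≤ m)
    (hpar : n ≡ m [ZMOD 2]) (hmn : m ≤ n) :
    ∃ t : ℤ,
      (∃ i : ℤ, 0 ≤ i ∧ i ≤ n - 2 ∧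
        (t - d ≡ n * i [ZMOD n * (n - 1)] ∨ t - d ≡ (n + 1) * i + 1 [ZMOD n * (n - 1)])) ∧
      (∃ j : ℤ, 0 ≤ j ∧ j ≤ m - 2 ∧
        (t ≡ m * j [ZMOD m * (m - 1)] ∨ t ≡ (m + 1) * j + 1 [ZMOD m * (m - 1)])) := by
  have hn0 : n ≠ 0 := by intro h; rw [h] at hn; norm_num at hn
  have hn10 : n - 1 ≠ 0 := by omega
  have hm0 : (0 : ℤ) < m := by linarith
  set G : ℤ := (Int.gcd n m : ℤ) with hGdef
  have hGn : G ∣ n := Int.gcd_dvd_left n m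
  have hGm : G ∣ m := Int.gcd_dvd_right n m
  by_cases hGd : G ∣ d
  · -- anchor–anchor
    obtain ⟨t, htn, htm⟩ := hedis_crt2 n m d 0 (by simpa using hGd)
    obtain ⟨i, hi0, hi1, hi2⟩ := hedis_anchor hn (htn.symm.dvd)
    obtain ⟨j, hj0, hj1, hj2⟩ := hedis_anchor hm (by simpa using htm.symm.dvd)
    exact ⟨t, ⟨i, hi0, hi1, Or.inl hi2⟩, ⟨j, hj0, hj1, Or.inl hj2⟩⟩
  · -- probe(n) – anchor(m)
    set G2 : ℤ := (Int.gcd (n - 1) m : ℤ) with hG2def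
    have hG2n1 : G2 ∣ n - 1 := Int.gcd_dvd_left (n - 1) m
    have hG2m : G2 ∣ m := Int.gcd_dvd_right (n - 1) m
    -- G2 is odd (same-parity hypothesis)
    have hG2odd : ¬ (2 ∣ G2) := by
      intro h2
      have ha : (2 : ℤ) ∣ n - 1 := h2.trans hG2n1
      have hb : (2 : ℤ) ∣ m := h2.trans hG2m
      have hc : (2 : ℤ) ∣ m - n := hpar.dvd
      omega
    obtain ⟨e, he⟩ : ∃ e : ℤ, 2 * e = G2 + 1 := ⟨(G2 + 1) / 2, by omega⟩
    -- G and G2 are coprime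
    have hcop : IsCoprime G G2 :=
      ((hedis_coprime_sub_one n).of_isCoprime_of_dvd_left hGn).of_isCoprime_of_dvd_right hG2n1
    have hGpos : (0 : ℤ) < G := by
      rw [hGdef]; exact_mod_cast Int.gcd_pos_of_ne_zero_left m hn0
    have hG2pos : (0 : ℤ) < G2 := by
      rw [hG2def]; exact_mod_cast Int.gcd_pos_of_ne_zero_left m hn10
    obtain ⟨i0, hi0G, hi0G2⟩ := hedis_crt2 G G2 (-(1 + d)) (-(e * (1 + d)))
      (by rw [Int.isCoprime_iff_gcd_eq_one.mp hcop]; exact one_dvd _)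
    have hGG2pos : 0 < G * G2 := mul_pos hGpos hG2pos
    have hGG2m : G * G2 ∣ m := hcop.mul_dvd hGm hG2m
    have hGG2le : G * G2 ≤ m := Int.le_of_dvd hm0 hGG2m
    set i : ℤ := i0 % (G * G2) with hidef
    have hi_nonneg : 0 ≤ i := Int.emod_nonneg _ (ne_of_gt hGG2pos)
    have hi_lt : i < G * G2 := Int.emod_lt_of_pos _ hGG2pos
    have himod : i ≡ i0 [ZMOD G * G2] := Int.emod_emod_of_dvd i0 dvd_rfl
    have hiG : G ∣ i + 1 + d := by
      have h1 : i ≡ -(1 + d) [ZMOD G] :=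
        (Int.ModEq.of_dvd (dvd_mul_right G G2) himod).trans hi0G
      obtain ⟨c, hc⟩ := h1.dvd
      exact ⟨-c, by linarith⟩
    have hiG2 : G2 ∣ 2 * i + 1 + d := by
      have h1 : i ≡ -(e * (1 + d)) [ZMOD G2] :=
        (Int.ModEq.of_dvd (dvd_mul_left G2 G) himod).trans hi0G2
      obtain ⟨c, hc⟩ := h1.dvd
      refine ⟨-(1 + d) - 2 * c, ?_⟩
      linear_combination (-2 : ℤ) * hc - (1 + d) * he
    have hine : i ≠ n - 1 := by
      intro hie
      apply hGd
      have h1 : G ∣ n + d := by rw [hie] at hiG; convert hiG using 1; ring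
      obtain ⟨c1, hc1⟩ := h1
      obtain ⟨c2, hc2⟩ := hGn
      exact ⟨c1 - c2, by linarith⟩
    have hi_le : i ≤ n - 2 := by
      have h1 : i ≤ n - 1 := by linarith
      omega
    -- the probe slot value
    have hGX : G ∣ (n + 1) * i + 1 + d := by
      have h1 : (n + 1) * i + 1 + d = n * i + (i + 1 + d) := by ring
      rw [h1]; exact dvd_add (hGn.mul_right i) hiG
    have hG2X : G2 ∣ (n + 1) * i + 1 + d := by
      have h1 : (n + 1) * i + 1 + d = (n - 1) * i + (2 * i + 1 + d) := by ring
      rw [h1]; exact dvd_add (hG2n1.mul_right i) hiG2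
    obtain ⟨s1, hs1⟩ := hedis_lincong m n ((n + 1) * i + 1 + d)
      (by rw [Int.gcd_comm]; exact hGX)
    obtain ⟨s2, hs2⟩ := hedis_lincong m (n - 1) ((n + 1) * i + 1 + d)
      (by rw [Int.gcd_comm]; exact hG2X)
    obtain ⟨s, hsn, hsn1⟩ := hedis_crt2 n (n - 1) s1 s2
      (by rw [Int.isCoprime_iff_gcd_eq_one.mp (hedis_coprime_sub_one n)]; exact one_dvd _)
    refine ⟨m * s, ?_, ?_⟩
    · -- probe of the n-schedule
      have htn : m * s ≡ (n + 1) * i + 1 + d [ZMOD n] := (hsn.mul_left m).trans hs1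
      have htn1 : m * s ≡ (n + 1) * i + 1 + d [ZMOD n - 1] := (hsn1.mul_left m).trans hs2
      have hcopnat : n.natAbs.Coprime (n - 1).natAbs :=
        Int.isCoprime_iff_gcd_eq_one.mp (hedis_coprime_sub_one n)
      have htN : m * s ≡ (n + 1) * i + 1 + d [ZMOD n * (n - 1)] :=
        (Int.modEq_and_modEq_iff_modEq_mul hcopnat).mp ⟨htn, htn1⟩
      refine ⟨i, hi_nonneg, hi_le, Or.inr ?_⟩
      have := htN.sub_right d
      have h2 : (n + 1) * i + 1 + d - d = (n + 1) * i + 1 := by ring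
      rwa [h2] at this
    · -- anchor of the m-schedule
      obtain ⟨j, hj0, hj1, hj2⟩ := hedis_anchor hm ⟨s, rfl⟩
      exact ⟨j, hj0, hj1, Or.inl hj2⟩

/-- Hedis guarantees discovery: for integers `n, m ≥ 2` of the same parity and any
clock drift `d`, there is a time `t` that is simultaneously an active (anchor or
probing) slot of the drifted parameter-`n` schedule and of the parameter-`m` schedule. -/
theorem hedis_discovery (n m : ℤ) (hn : 2 ≤ n) (hm : 2 ≤ m)
    (hpar : n ≡ m [ZMOD 2]) (d : ℤ) :
    ∃ t : ℤ,
      (∃ i : ℤ, 0 ≤ i ∧ i ≤ n - 2 ∧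
        (t ≡ n * i + d [ZMOD (n * (n - 1))] ∨
         t ≡ (n + 1) * i + 1 + d [ZMOD (n * (n - 1))])) ∧
      (∃ j : ℤ, 0 ≤ j ∧ j ≤ m - 2 ∧
        (t ≡ m * j [ZMOD (m * (m - 1))] ∨
         t ≡ (m + 1) * j + 1 [ZMOD (m * (m - 1))])) := by
  rcases le_total m n with hmn | hnm
  · obtain ⟨t, ⟨i, hi0, hi1, hi2⟩, hB⟩ := hedis_core n m d hn hm hpar hmn
    refine ⟨t, ⟨i, hi0, hi1, ?_⟩, hB⟩
    rcases hi2 with h | h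
    · left
      have := h.add_right d
      have h2 : t - d + d = t := by ring
      rwa [h2] at this
    · right
      have := h.add_right d
      have h2 : t - d + d = t := by ring
      rwa [h2] at this
  · obtain ⟨t, ⟨j, hj0, hj1, hj2⟩, ⟨i, hi0, hi1, hi2⟩⟩ :=
      hedis_core m n (-d) hm hn hpar.symm hnm
    refine ⟨t + d, ⟨i, hi0, hi1, ?_⟩, ⟨j, hj0, hj1, ?_⟩⟩
    · rcases hi2 with h | h
      · left; exact h.add_right d
      · right
        have := h.add_right d
        have h2 : (n + 1) * i + 1 + d = (n + 1) * i + 1 + d := rfl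
        exact this
    · have h3 : t - -d = t + d := by ring
      rw [h3] at hj2
      exact hj2
end

section
/- Let n and m be integers with m > n ≥ 2 and m ≡ n (mod 2). Then for every integer d there exists an index j with 0 ≤ j ≤ m−2 such that (m+1)·j ≡ d − 1 (mod gcd(n, m·(m−1))). Consequently, the anchor-probing overlap between the Hedis schedules with parameters n and m occurs for every clock drift d. -/
/-- For integers `m > n ≥ 2` of the same parity and any drift `d`, some index
`j ∈ [0, m-2]` satisfies `(m+1)·j ≡ d − 1 (mod gcd(n, m·(m−1)))`; hence the
anchor-probing overlap between the Hedis schedules occurs for every clock drift. -/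
theorem hedis_anchor_probing_always_solvable (n m : ℤ) (hn : 2 ≤ n) (hnm : n < m)
    (hpar : m ≡ n [ZMOD 2]) (d : ℤ) :
    ∃ j : ℤ, 0 ≤ j ∧ j ≤ m - 2 ∧
      (m + 1) * j ≡ d - 1 [ZMOD ((Int.gcd n (m * (m - 1)) : ℕ) : ℤ)] := by
  set g : ℤ := ((Int.gcd n (m * (m - 1)) : ℕ) : ℤ) with hgdef
  have hn0 : (0:ℤ) < n := by linarith
  have hgn : g ∣ n := Int.gcd_dvd_left n (m * (m - 1))
  have hgm : g ∣ m * (m - 1) := Int.gcd_dvd_right n (m * (m - 1))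
  have hg0 : 0 < g := by
    have : n.gcd (m * (m - 1)) ≠ 0 := by
      simp only [ne_eq, Int.gcd_eq_zero_iff, not_and_or]
      left; exact fun h => by simp [h] at hn0
    rw [hgdef]
    exact_mod_cast Nat.pos_of_ne_zero this
  obtain ⟨t, ht⟩ := hgm
  have hgt : g * t = (m + 1) * (m - 2) + 2 := by linear_combination -ht
  -- coprimality of m+1 and g
  have hcop : IsCoprime (m + 1) g := by
    by_cases h2 : (2:ℤ) ∣ n
    · -- n even, so m even
      have h2m : (2:ℤ) ∣ m := by have := hpar.dvd; omega
      obtain ⟨k, hk⟩ := h2m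
      exact ⟨1 + k * (m - 2), -k * t, by linear_combination (-k) * hgt + hk⟩
    · -- n odd, so g odd
      have h2g : ¬ (2:ℤ) ∣ g := fun h => h2 (h.trans hgn)
      have hodd : g % 2 = 1 := Int.emod_two_eq_zero_or_one g |>.resolve_left
        (fun h => h2g (Int.dvd_of_emod_eq_zero h))
      obtain ⟨s, hs⟩ : ∃ s, g = 2 * s + 1 := ⟨g / 2, by omega⟩
      exact ⟨s * (m - 2), 1 - s * t, by linear_combination (-s) * hgt + hs⟩
  obtain ⟨u, v, huv⟩ := hcop
  refine ⟨(u * (d - 1)) % g, Int.emod_nonneg _ hg0.ne', ?_, ?_⟩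
  · have h1 : (u * (d - 1)) % g < g := Int.emod_lt_of_pos _ hg0
    have h2 : g ≤ n := Int.le_of_dvd hn0 hgn
    linarith
  · have e1 : (u * (d - 1)) % g ≡ u * (d - 1) [ZMOD g] := Int.emod_emod_of_dvd _ dvd_rfl
    have e2 : (m + 1) * (u * (d - 1)) ≡ d - 1 [ZMOD g] :=
      (Int.modEq_iff_dvd.mpr ⟨-(v * (d - 1)), by linear_combination (d - 1) * huv⟩).symm
    exact (e1.mul_left (m + 1)).trans e2
end

section
/- Let n ≥ 2 be an integer. The set of active slots of the Hedis schedule with parameter n, namely {t : 0 ≤ t < n(n−1) and t = n·i or t = (n+1)·i + 1 for some i ∈ {0,…,n−2}}, has exactly 2(n−1) elements; in particular all 2(n−1) listed slots lie in [0, n(n−1)) and are pairwise distinct, so the duty cycle of the schedule equals 2(n−1)/(n(n−1)) = 2/n. -/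
/-- The set of active slots of the Hedis schedule with parameter `n ≥ 2`,
`{t ∈ [0, n(n−1)) : t = n·i or t = (n+1)·i + 1 for some i ∈ {0,…,n−2}}`,
has exactly `2(n−1)` elements, so the duty cycle equals `2(n−1)/(n(n−1)) = 2/n`. -/
theorem hedis_duty_cycle (n : ℕ) (hn : 2 ≤ n) :
    ((Finset.range (n * (n - 1))).filter
      (fun t => ∃ i < n - 1, t = n * i ∨ t = (n + 1) * i + 1)).card = 2 * (n - 1) ∧
    ((2 * (n - 1) : ℕ) : ℚ) / ((n * (n - 1) : ℕ) : ℚ) = 2 / (n : ℚ) := by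
  constructor
  · have hset : ((Finset.range (n * (n - 1))).filter
        (fun t => ∃ i < n - 1, t = n * i ∨ t = (n + 1) * i + 1)) =
        ((Finset.range (n - 1)).image (fun i => n * i)) ∪
        ((Finset.range (n - 1)).image (fun i => (n + 1) * i + 1)) := by
      ext t
      simp only [Finset.mem_filter, Finset.mem_range, Finset.mem_union, Finset.mem_image]
      constructor
      · rintro ⟨_, i, hi, h | h⟩
        · exact Or.inl ⟨i, hi, h.symm⟩
        · exact Or.inr ⟨i, hi, h.symm⟩
      · obtain ⟨k, rfl⟩ : ∃ k, n = k + 2 := ⟨n - 2, by omega⟩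
        have hk1 : k + 2 - 1 = k + 1 := rfl
        rw [hk1]
        rintro (⟨i, hi, rfl⟩ | ⟨i, hi, rfl⟩)
        · exact ⟨by nlinarith, i, hi, Or.inl rfl⟩
        · exact ⟨by nlinarith, i, hi, Or.inr rfl⟩
    rw [hset, Finset.card_union_of_disjoint, Finset.card_image_of_injective,
        Finset.card_image_of_injective, Finset.card_range, two_mul]
    · intro a b h
      simp only [add_left_inj] at h
      exact Nat.eq_of_mul_eq_mul_left (by omega) h
    · intro a b h
      exact Nat.eq_of_mul_eq_mul_left (by omega) h
    · rw [Finset.disjoint_left]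
      rintro t ht ht'
      simp only [Finset.mem_image, Finset.mem_range] at ht ht'
      obtain ⟨i, hi, rfl⟩ := ht
      obtain ⟨j, hj, hij⟩ := ht'
      have h1 : n * i = n * j + (j + 1) := by nlinarith
      have h2 : j < i := by nlinarith
      have h3 : n * (i - j) = j + 1 := by rw [Nat.mul_sub]; omega
      have h4 : n ≤ n * (i - j) := Nat.le_mul_of_pos_right n (by omega)
      have hj' : j + 1 < n := by omega
      linarith
  · have h1 : ((n - 1 : ℕ) : ℚ) ≠ 0 := by
      have : 1 ≤ n - 1 := by omega
      exact_mod_cast Nat.one_le_iff_ne_zero.mp this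
    push_cast
    rw [mul_div_mul_right _ _ h1]
end
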